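/- arXiv:1906.11593 — 9 statements merged into one kernel-verified Lean document; each statement's English description precedes it below -/
import Mathlib

section
/- Let v : ℤ³ → ℂ be nowhere zero and satisfy the discrete modified KP equation a₁(v(n+1,m+1,h)/v(n,m+1,h) − v(n+1,m,h+1)/v(n,m,h+1)) + a₂(v(n,m+1,h+1)/v(n,m,h+1) − v(n+1,m+1,h)/v(n+1,m,h)) + a₃(v(n+1,m,h+1)/v(n+1,m,h) − v(n,m+1,h+1)/v(n,m+1,h)) = 0. If u : ℤ³ → ℂ satisfies the Miura relations a₁ − a₂ + u(n,m+1,h) − u(n+1,m,h) = a₁ v(n+1,m,h)/v(n,m,h) − a₂ v(n,m+1,h)/v(n,m,h), a₂ − a₃ + u(n,m,h+1) − u(n,m+1,h) = a₂ v(n,m+1,h)/v(n,m,h) − a₃ v(n,m,h+1)/v(n,m,h), and a₁ − a₃ + u(n,m,h+1) − u(n+1,m,h) = a₁ v(n+1,m,h)/v(n,m,h) − a₃ v(n,m,h+1)/v(n,m,h) for all n,m,h, then u satisfies the discrete KP equation (a₁−a₃+u(n,m+1,h+1)−u(n+1,m+1,h))(a₂−a₃+u(n,m,h+1)−u(n,m+1,h))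 = (a₂−a₃+u(n+1,m,h+1)−u(n+1,m+1,h))(a₁−a₃+u(n,m,h+1)−u(n+1,m,h)). -/
/-- If a nowhere-zero `v` satisfies the discrete modified KP equation and `u` is related
to `v` by the discrete Miura maps, then `u` satisfies the discrete KP equation. -/
theorem stmt_2 (a₁ a₂ a₃ : ℂ) (v u : ℤ → ℤ → ℤ → ℂ)
    (hv0 : ∀ n m h : ℤ, v n m h ≠ 0)
    (hmKP : ∀ n m h : ℤ,
      a₁ * (v (n+1) (m+1) h / v n (m+1) h - v (n+1) m (h+1) / v n m (h+1))
        + a₂ * (v n (m+1) (h+1) / v n m (h+1) - v (n+1) (m+1) h / v (n+1) m h)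
        + a₃ * (v (n+1) m (h+1) / v (n+1) m h - v n (m+1) (h+1) / v n (m+1) h) = 0)
    (hM1 : ∀ n m h : ℤ, a₁ - a₂ + u n (m+1) h - u (n+1) m h
      = a₁ * v (n+1) m h / v n m h - a₂ * v n (m+1) h / v n m h)
    (hM2 : ∀ n m h : ℤ, a₂ - a₃ + u n m (h+1) - u n (m+1) h
      = a₂ * v n (m+1) h / v n m h - a₃ * v n m (h+1) / v n m h)
    (hM3 : ∀ n m h : ℤ, a₁ - a₃ + u n m (h+1) - u (n+1) m h
      = a₁ * v (n+1) m h / v n m h - a₃ * v n m (h+1) / v n m h) :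
    ∀ n m h : ℤ,
      (a₁ - a₃ + u n (m+1) (h+1) - u (n+1) (m+1) h)
          * (a₂ - a₃ + u n m (h+1) - u n (m+1) h)
        = (a₂ - a₃ + u (n+1) m (h+1) - u (n+1) (m+1) h)
          * (a₁ - a₃ + u n m (h+1) - u (n+1) m h) := by
  intro n m h
  have h000 := hv0 n m h
  have h100 := hv0 (n+1) m h
  have h010 := hv0 n (m+1) h
  have h001 := hv0 n m (h+1)
  set V000 := v n m h
  set V100 := v (n+1) m h
  set V010 := v n (m+1) h
  set V001 := v n m (h+1)
  set V110 := v (n+1) (m+1) h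
  set V101 := v (n+1) m (h+1)
  set V011 := v n (m+1) (h+1)
  -- cleared modified KP
  have hMK : a₁*(V110*V001 - V101*V010)*V100 + a₂*(V011*V100 - V110*V001)*V010
      + a₃*(V101*V010 - V011*V100)*V001 = 0 := by
    have hK := hmKP n m h
    have e : a₁*(V110*V001 - V101*V010)*V100 + a₂*(V011*V100 - V110*V001)*V010
        + a₃*(V101*V010 - V011*V100)*V001
        = (a₁ * (V110 / V010 - V101 / V001)
            + a₂ * (V011 / V001 - V110 / V100)
            + a₃ * (V101 / V100 - V011 / V010)) * (V010 * V001 * V100) := by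
      field_simp
    rw [e, hK, zero_mul]
  have hA := hM3 n (m+1) h
  have hB := hM2 n m h
  have hC := hM2 (n+1) m h
  have hD := hM3 n m h
  rw [hA, hB, hC, hD]
  show (a₁ * V110 / V010 - a₃ * V011 / V010) * (a₂ * V010 / V000 - a₃ * V001 / V000)
      = (a₂ * V110 / V100 - a₃ * V101 / V100) * (a₁ * V100 / V000 - a₃ * V001 / V000)
  field_simp
  linear_combination (-a₃) * hMK
end

section
/- Let 𝒩 ≥ 2 and suppose τ : ℤ² × (ℤ/𝒩ℤ) → ℂ is nowhere zero and satisfies, for every h, a₁(τ(n,m,h+1)τ(n+1,m+1,h) − τ(n,m+1,h)τ(n+1,m,h+1)) = a₂(τ(n,m,h+1)τ(n+1,m+1,h) − τ(n+1,m,h)τ(n,m+1,h+1)). Define v(n,m,h) = τ(n,m,h+1)/τ(n,m,h). Then v satisfies the discrete modified Gel'fand–Dikii equation a₁(v(n+1,m+1,h)/v(n,m+1,h) − v(n+1,m,h+1)/v(n,m,h+1)) = a₂(v(n+1,m+1,h)/v(n+1,m,h) − v(n,m+1,h+1)/v(n,m,h+1)) for every h, and moreover the product of v(n,m,h) over all h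 ∈ ℤ/𝒩ℤ equals 1. -/
/-- The quotient potential `v = τ(·,·,h+1)/τ(·,·,h)` of a nowhere-zero solution of the
discrete bilinear Gel'fand–Dikii system satisfies the discrete modified Gel'fand–Dikii
equation, and the product of its components equals 1. -/
theorem stmt_3 (N : ℕ) [NeZero N] (hN : 2 ≤ N) (a₁ a₂ : ℂ)
    (τ : ℤ → ℤ → ZMod N → ℂ)
    (hτ0 : ∀ (n m : ℤ) (h : ZMod N), τ n m h ≠ 0)
    (hbil : ∀ (n m : ℤ) (h : ZMod N),
      a₁ * (τ n m (h+1) * τ (n+1) (m+1) h - τ n (m+1) h * τ (n+1) m (h+1))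
        = a₂ * (τ n m (h+1) * τ (n+1) (m+1) h - τ (n+1) m h * τ n (m+1) (h+1)))
    (v : ℤ → ℤ → ZMod N → ℂ)
    (hv : ∀ (n m : ℤ) (h : ZMod N), v n m h = τ n m (h+1) / τ n m h) :
    (∀ (n m : ℤ) (h : ZMod N),
      a₁ * (v (n+1) (m+1) h / v n (m+1) h - v (n+1) m (h+1) / v n m (h+1))
        = a₂ * (v (n+1) (m+1) h / v (n+1) m h - v n (m+1) (h+1) / v n m (h+1)))
    ∧ (∀ n m : ℤ, (∏ h : ZMod N, v n m h) = 1) := by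
  constructor
  · intro n m h
    simp only [hv]
    have h1 := hτ0 n m h
    have h2 := hτ0 n m (h+1)
    have h3 := hτ0 n m (h+1+1)
    have h4 := hτ0 (n+1) m h
    have h5 := hτ0 (n+1) m (h+1)
    have h6 := hτ0 (n+1) m (h+1+1)
    have h7 := hτ0 n (m+1) h
    have h8 := hτ0 n (m+1) (h+1)
    have h9 := hτ0 n (m+1) (h+1+1)
    have h10 := hτ0 (n+1) (m+1) h
    have h11 := hτ0 (n+1) (m+1) (h+1)
    have e1 := hbil n m h
    have e2 := hbil n m (h+1)
    -- rewrite each double quotient as a single fraction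
    have t1 : (τ (n+1) (m+1) (h+1) / τ (n+1) (m+1) h) / (τ n (m+1) (h+1) / τ n (m+1) h)
        = (τ (n+1) (m+1) (h+1) * τ n (m+1) h) / (τ (n+1) (m+1) h * τ n (m+1) (h+1)) := by
      field_simp
    have t2 : (τ (n+1) m (h+1+1) / τ (n+1) m (h+1)) / (τ n m (h+1+1) / τ n m (h+1))
        = (τ (n+1) m (h+1+1) * τ n m (h+1)) / (τ (n+1) m (h+1) * τ n m (h+1+1)) := by
      field_simp
    have t3 : (τ (n+1) (m+1) (h+1) / τ (n+1) (m+1) h) / (τ (n+1) m (h+1) / τ (n+1) m h)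
        = (τ (n+1) (m+1) (h+1) * τ (n+1) m h) / (τ (n+1) (m+1) h * τ (n+1) m (h+1)) := by
      field_simp
    have t4 : (τ n (m+1) (h+1+1) / τ n (m+1) (h+1)) / (τ n m (h+1+1) / τ n m (h+1))
        = (τ n (m+1) (h+1+1) * τ n m (h+1)) / (τ n (m+1) (h+1) * τ n m (h+1+1)) := by
      field_simp
    rw [t1, t2, t3, t4,
      div_sub_div _ _ (mul_ne_zero h10 h8) (mul_ne_zero h5 h3),
      div_sub_div _ _ (mul_ne_zero h10 h5) (mul_ne_zero h8 h3),
      mul_div_assoc', mul_div_assoc',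
      div_eq_div_iff
        (mul_ne_zero (mul_ne_zero h10 h8) (mul_ne_zero h5 h3))
        (mul_ne_zero (mul_ne_zero h10 h5) (mul_ne_zero h8 h3))]
    linear_combination
      (τ (n+1) (m+1) h * τ (n+1) m (h+1) * τ n (m+1) (h+1) * τ n m (h+1+1))
        * ((τ n m (h+1) * τ (n+1) (m+1) h) * e2
          - (τ n m (h+1+1) * τ (n+1) (m+1) (h+1)) * e1)
  · intro n m
    simp only [hv, Finset.prod_div_distrib]
    rw [Fintype.prod_equiv (Equiv.addRight (1 : ZMod N)) (fun h => τ n m (h+1))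
      (fun h => τ n m h) (fun h => rfl)]
    exact div_self (Finset.prod_ne_zero_iff.mpr fun h _ => hτ0 n m h)
end

section
/- Let 𝒩 ≥ 2, a₁, a₂ ∈ ℂ, and u : ℤ² × (ℤ/𝒩ℤ) → ℂ, and suppose there exists a nowhere-zero τ : ℤ² × (ℤ/𝒩ℤ) → ℂ such that a₁ + u(n,m,h+1) − u(n+1,m,h) = a₁ τ(n+1,m,h+1)τ(n,m,h)/(τ(n+1,m,h)τ(n,m,h+1)) and a₂ + u(n,m,h+1) − u(n,m+1,h) = a₂ τ(n,m+1,h+1)τ(n,m,h)/(τ(n,m+1,h)τ(n,m,h+1)) for all n, m, h. Then the first integrals hold: ∏_{h ∈ ℤ/𝒩ℤ} (a₁ + u(n,m,h+1) − u(n+1,m,h)) = a₁^𝒩 and ∏_{h ∈ ℤ/𝒩ℤ} (a₂ + u(n,m,h+1) − u(n,m+1,h)) = a₂^𝒩 for all n, m. -/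
lemma prod_ratio_aux (N : ℕ) [NeZero N] (a : ℂ) (f g : ZMod N → ℂ)
    (hf : ∀ h, f h ≠ 0) (hg : ∀ h, g h ≠ 0) :
    (∏ h : ZMod N, a * (f (h+1) * g h) / (f h * g (h+1))) = a ^ N := by
  have hP : (∏ h : ZMod N, f (h+1)) = ∏ h : ZMod N, f h :=
    Fintype.prod_equiv (Equiv.addRight (1 : ZMod N)) _ _ (fun h => rfl)
  have hQ : (∏ h : ZMod N, g (h+1)) = ∏ h : ZMod N, g h :=
    Fintype.prod_equiv (Equiv.addRight (1 : ZMod N)) _ _ (fun h => rfl)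
  have hPf : (∏ h : ZMod N, f h) ≠ 0 := Finset.prod_ne_zero_iff.2 fun h _ => hf h
  have hQg : (∏ h : ZMod N, g h) ≠ 0 := Finset.prod_ne_zero_iff.2 fun h _ => hg h
  calc (∏ h : ZMod N, a * (f (h+1) * g h) / (f h * g (h+1)))
      = (∏ h : ZMod N, a * (f (h+1) * g h)) / ∏ h : ZMod N, (f h * g (h+1)) := by
        rw [Finset.prod_div_distrib]
    _ = (a ^ N * ((∏ h : ZMod N, f (h+1)) * ∏ h : ZMod N, g h)) /
          ((∏ h : ZMod N, f h) * ∏ h : ZMod N, g (h+1)) := by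
        rw [Finset.prod_mul_distrib, Finset.prod_mul_distrib, Finset.prod_mul_distrib, Finset.prod_const,
          Finset.card_univ, ZMod.card]
    _ = a ^ N := by
        rw [hP, hQ]
        field_simp

/-- First integrals of the discrete Gel'fand–Dikii hierarchy of rank `N`:
if `u` is related to a nowhere-zero tau function by the Miura maps, then the products of
the shifted differences over the cyclic component index equal `a₁^N` and `a₂^N`. -/
theorem stmt_4 (N : ℕ) [NeZero N] (hN : 2 ≤ N) (a₁ a₂ : ℂ)
    (u : ℤ → ℤ → ZMod N → ℂ)
    (hτ : ∃ τ : ℤ → ℤ → ZMod N → ℂ,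
      (∀ (n m : ℤ) (h : ZMod N), τ n m h ≠ 0) ∧
      (∀ (n m : ℤ) (h : ZMod N),
        a₁ + u n m (h+1) - u (n+1) m h
          = a₁ * (τ (n+1) m (h+1) * τ n m h) / (τ (n+1) m h * τ n m (h+1))) ∧
      (∀ (n m : ℤ) (h : ZMod N),
        a₂ + u n m (h+1) - u n (m+1) h
          = a₂ * (τ n (m+1) (h+1) * τ n m h) / (τ n (m+1) h * τ n m (h+1)))) :
    ∀ n m : ℤ,
      (∏ h : ZMod N, (a₁ + u n m (h+1) - u (n+1) m h)) = a₁ ^ N ∧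
      (∏ h : ZMod N, (a₂ + u n m (h+1) - u n (m+1) h)) = a₂ ^ N := by
  obtain ⟨τ, hτ0, h1, h2⟩ := hτ
  intro n m
  constructor
  · calc (∏ h : ZMod N, (a₁ + u n m (h+1) - u (n+1) m h))
        = ∏ h : ZMod N, a₁ * (τ (n+1) m (h+1) * τ n m h) / (τ (n+1) m h * τ n m (h+1)) :=
          Finset.prod_congr rfl fun h _ => h1 n m h
      _ = a₁ ^ N := prod_ratio_aux N a₁ (τ (n+1) m) (τ n m) (hτ0 _ _) (hτ0 _ _)
  · calc (∏ h : ZMod N, (a₂ + u n m (h+1) - u n (m+1) h))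
        = ∏ h : ZMod N, a₂ * (τ n (m+1) (h+1) * τ n m h) / (τ n (m+1) h * τ n m (h+1)) :=
          Finset.prod_congr rfl fun h _ => h2 n m h
      _ = a₂ ^ N := prod_ratio_aux N a₂ (τ n (m+1)) (τ n m) (hτ0 _ _) (hτ0 _ _)
end

section
/- Let 𝒩 = 2 and let τ⁰, τ¹ : ℤ² → ℂ be nowhere zero and satisfy the coupled bilinear system a₁(τ⁰(n,m)τ¹(n+1,m+1) − τ¹(n,m+1)τ⁰(n+1,m)) = a₂(τ⁰(n,m)τ¹(n+1,m+1) − τ¹(n+1,m)τ⁰(n,m+1)) and a₁(τ¹(n,m)τ⁰(n+1,m+1) − τ⁰(n,m+1)τ¹(n+1,m)) = a₂(τ¹(n,m)τ⁰(n+1,m+1) − τ⁰(n+1,m)τ¹(n,m+1)), where a₁ ≠ ±a₂ and a₁a₂ ≠ 0. Then v(n,m) := τ¹(n,m)/τ⁰(n,m) satisfies the discrete modified KdV equation a₁(v(n,m)v(n,m+1) − v(n+1,m)v(n+1,m+1)) = a₂(v(n,m)v(n+1,m) − v(n,m+1)v(n+1,m+1)). -/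
/-- For the rank-2 bilinear Gel'fand–Dikii system, the quotient `v = τ¹/τ⁰` satisfies the
discrete modified KdV equation. -/
theorem stmt_6 (a₁ a₂ : ℂ) (ha1 : a₁ ≠ a₂) (ha2 : a₁ ≠ -a₂) (ha3 : a₁ * a₂ ≠ 0)
    (τ0 τ1 : ℤ → ℤ → ℂ)
    (hτ0 : ∀ n m : ℤ, τ0 n m ≠ 0) (hτ1 : ∀ n m : ℤ, τ1 n m ≠ 0)
    (hbil0 : ∀ n m : ℤ,
      a₁ * (τ0 n m * τ1 (n+1) (m+1) - τ1 n (m+1) * τ0 (n+1) m)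
        = a₂ * (τ0 n m * τ1 (n+1) (m+1) - τ1 (n+1) m * τ0 n (m+1)))
    (hbil1 : ∀ n m : ℤ,
      a₁ * (τ1 n m * τ0 (n+1) (m+1) - τ0 n (m+1) * τ1 (n+1) m)
        = a₂ * (τ1 n m * τ0 (n+1) (m+1) - τ0 (n+1) m * τ1 n (m+1)))
    (v : ℤ → ℤ → ℂ) (hv : ∀ n m : ℤ, v n m = τ1 n m / τ0 n m) :
    ∀ n m : ℤ,
      a₁ * (v n m * v n (m+1) - v (n+1) m * v (n+1) (m+1))
        = a₂ * (v n m * v (n+1) m - v n (m+1) * v (n+1) (m+1)) := by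
  intro n m
  have h1 := hbil0 n m
  have h2 := hbil1 n m
  rw [hv, hv, hv, hv]
  have t00 := hτ0 n m
  have t01 := hτ0 n (m+1)
  have t10 := hτ0 (n+1) m
  have t11 := hτ0 (n+1) (m+1)
  field_simp
  linear_combination (-(τ1 n m * τ0 (n+1) (m+1)) * h1 + (τ0 n m * τ1 (n+1) (m+1)) * h2)
end

section
/- Let v : ℤ² → ℂ be nowhere zero. Then v satisfies the discrete sine–Gordon equation a₁(v(n+1,m)v(n,m+1) − v(n,m)v(n+1,m+1)) = a₂(1 − v(n,m)v(n+1,m)v(n,m+1)v(n+1,m+1)) if and only if the pair (v⁰, v¹) := (v, 1/v) satisfies the discrete-time two-dimensional Toda system of A₁⁽¹⁾ type: a₁(v⁰(n+1,m+1)/v⁰(n,m+1) − v⁰(n+1,m)/v⁰(n,m)) = a₂(v⁰(n+1,m+1)/v¹(n+1,m) − v¹(n,m+1)/v⁰(n,m)) and a₁(v¹(n+1,m+1)/v¹(n,m+1) − v¹(n+1,m)/v¹(n,m)) = a₂(v¹(n+1,m+1)/v⁰(n+1,m) − v⁰(n,m+1)/v¹(n,m)). -/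
/-- Equivalence between the discrete sine–Gordon equation for `v` and the discrete-time
two-dimensional Toda system of type `A₁⁽¹⁾` for the pair `(v, 1/v)`. -/
theorem stmt_7 (a₁ a₂ : ℂ) (ha₁ : a₁ ≠ 0) (ha₂ : a₂ ≠ 0)
    (v : ℤ → ℤ → ℂ) (hv0 : ∀ n m : ℤ, v n m ≠ 0) :
    (∀ n m : ℤ,
      a₁ * (v (n+1) m * v n (m+1) - v n m * v (n+1) (m+1))
        = a₂ * (1 - v n m * v (n+1) m * v n (m+1) * v (n+1) (m+1)))
    ↔
    ((∀ n m : ℤ,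
      a₁ * (v (n+1) (m+1) / v n (m+1) - v (n+1) m / v n m)
        = a₂ * (v (n+1) (m+1) / (v (n+1) m)⁻¹ - (v n (m+1))⁻¹ / v n m)) ∧
     (∀ n m : ℤ,
      a₁ * ((v (n+1) (m+1))⁻¹ / (v n (m+1))⁻¹ - (v (n+1) m)⁻¹ / (v n m)⁻¹)
        = a₂ * ((v (n+1) (m+1))⁻¹ / v (n+1) m - v n (m+1) / (v n m)⁻¹))) := by
  constructor
  · intro h
    have key : ∀ n m : ℤ, v n m ≠ 0 ∧ v (n+1) m ≠ 0 := fun n m => ⟨hv0 n m, hv0 (n+1) m⟩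
    constructor
    · intro n m
      have ha := hv0 n m
      have hb := hv0 (n+1) m
      have hc := hv0 n (m+1)
      have hd := hv0 (n+1) (m+1)
      have H := h n m
      field_simp
      linear_combination -H
    · intro n m
      have ha := hv0 n m
      have hb := hv0 (n+1) m
      have hc := hv0 n (m+1)
      have hd := hv0 (n+1) (m+1)
      have H := h n m
      field_simp
      linear_combination H
  · rintro ⟨h1, _⟩ n m
    have ha := hv0 n m
    have hb := hv0 (n+1) m
    have hc := hv0 n (m+1)
    have hd := hv0 (n+1) (m+1)
    have H := h1 n m
    field_simp at H
    linear_combination -H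
end

section
/- Let τ : ℤ² → ℂ be nowhere vanishing and satisfy the two 6-point discrete bilinear KdV equations (a₁+a₂)τ(n,m+1)τ(n+2,m) + (a₁−a₂)τ(n,m)τ(n+2,m+1) = 2a₁τ(n+1,m)τ(n+1,m+1) and (a₁+a₂)τ(n+1,m)τ(n,m+2) − (a₁−a₂)τ(n,m)τ(n+1,m+2) = 2a₂τ(n,m+1)τ(n+1,m+1) for all n,m. Then τ satisfies the 5-point discrete bilinear KdV equation (a₁−a₂)²τ(n,m)τ(n+2,m+2) − (a₁+a₂)²τ(n+2,m)τ(n,m+2) + 4a₁a₂τ(n+1,m+1)² = 0. -/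
/-- The two 6-point discrete bilinear KdV equations imply the 5-point discrete bilinear
KdV equation. -/
theorem stmt_8 (a₁ a₂ : ℂ) (τ : ℤ → ℤ → ℂ)
    (hτ0 : ∀ n m : ℤ, τ n m ≠ 0)
    (h6a : ∀ n m : ℤ,
      (a₁ + a₂) * τ n (m+1) * τ (n+2) m + (a₁ - a₂) * τ n m * τ (n+2) (m+1)
        = 2 * a₁ * τ (n+1) m * τ (n+1) (m+1))
    (h6b : ∀ n m : ℤ,
      (a₁ + a₂) * τ (n+1) m * τ n (m+2) - (a₁ - a₂) * τ n m * τ (n+1) (m+2)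
        = 2 * a₂ * τ n (m+1) * τ (n+1) (m+1)) :
    ∀ n m : ℤ,
      (a₁ - a₂)^2 * τ n m * τ (n+2) (m+2) - (a₁ + a₂)^2 * τ (n+2) m * τ n (m+2)
        + 4 * a₁ * a₂ * (τ (n+1) (m+1))^2 = 0 := by
  intro n m
  have e1 := h6a n m
  have e2 := h6a n (m+1)
  have e3 := h6b n m
  simp only [show m+1+1 = m+2 from by ring] at e2
  have key : ((a₁ - a₂)^2 * τ n m * τ (n+2) (m+2) - (a₁ + a₂)^2 * τ (n+2) m * τ n (m+2)
      + 4 * a₁ * a₂ * (τ (n+1) (m+1))^2) * τ n (m+1) = 0 := by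
    linear_combination ((a₁ - a₂) * τ n m) * e2 - ((a₁ + a₂) * τ n (m+2)) * e1
      - (2 * a₁ * τ (n+1) (m+1)) * e3
  exact (mul_eq_zero.mp key).resolve_right (hτ0 n (m+1))
end

section
/- Let u : ℤ² → ℂ satisfy the discrete Schwarzian KdV relation derived from the 𝒩 = 2, (α,β) = (1,1) system: suppose there exist nowhere-zero v⁰, v¹ : ℤ² → ℂ with v⁰v¹ = 1 such that a₁ + u(n,m) − u(n+1,m) = a₁ v⁰(n+1,m)/v¹(n,m) (component 0) and a₁ + u¹(n,m) − u¹(n+1,m) = a₁ v¹(n+1,m)/v⁰(n,m), and similarly with a₂ for m-shifts. Then the first integrals (a₁ + u(n,m) − u(n+1,m))(a₁ + u¹(n,m) − u¹(n+1,m)) = a₁² and (a₂ + u(n,m) − u(n,m+1))(a₂ + u¹(n,m) − u¹(n,m+1)) = a₂² hold; consequently, if additionally the two-component system of the (1,1) class holds, the component u satisfies the discrete Schwarzian KdV equation (a₁+u(n,m)−u(n+1,m))(a₁+u(n,m+1)−u(n+1,m+1)) / ((a₂+u(n,m)−u(n,m+1))(a₂+u(n+1,m)−u(n+1,m+1)))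 = a₁²/a₂². -/
/-- The `𝒩 = 2`, `(α,β) = (1,1)` class: the Miura maps imply the first integrals, and
together with the two-component system they imply the discrete Schwarzian KdV equation. -/
theorem stmt_9 (a₁ a₂ : ℂ) (ha₂ : a₂ ≠ 0)
    (u u₁ v0 v1 : ℤ → ℤ → ℂ)
    (hv0 : ∀ n m : ℤ, v0 n m ≠ 0) (hv1 : ∀ n m : ℤ, v1 n m ≠ 0)
    (hprod : ∀ n m : ℤ, v0 n m * v1 n m = 1)
    (hM1 : ∀ n m : ℤ, a₁ + u n m - u (n+1) m = a₁ * v0 (n+1) m / v1 n m)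
    (hM2 : ∀ n m : ℤ, a₁ + u₁ n m - u₁ (n+1) m = a₁ * v1 (n+1) m / v0 n m)
    (hM3 : ∀ n m : ℤ, a₂ + u n m - u n (m+1) = a₂ * v0 n (m+1) / v1 n m)
    (hM4 : ∀ n m : ℤ, a₂ + u₁ n m - u₁ n (m+1) = a₂ * v1 n (m+1) / v0 n m)
    (hS1 : ∀ n m : ℤ,
      (a₁ + u n (m+1) - u (n+1) (m+1)) / (a₁ + u₁ n m - u₁ (n+1) m)
        = (a₂ + u (n+1) m - u (n+1) (m+1)) / (a₂ + u₁ n m - u₁ n (m+1)))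
    (hS2 : ∀ n m : ℤ,
      (a₁ + u₁ n (m+1) - u₁ (n+1) (m+1)) / (a₁ + u n m - u (n+1) m)
        = (a₂ + u₁ (n+1) m - u₁ (n+1) (m+1)) / (a₂ + u n m - u n (m+1)))
    (hden : ∀ n m : ℤ, a₂ + u n m - u n (m+1) ≠ 0) :
    (∀ n m : ℤ,
      (a₁ + u n m - u (n+1) m) * (a₁ + u₁ n m - u₁ (n+1) m) = a₁^2 ∧
      (a₂ + u n m - u n (m+1)) * (a₂ + u₁ n m - u₁ n (m+1)) = a₂^2)
    ∧ (∀ n m : ℤ,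
      ((a₁ + u n m - u (n+1) m) * (a₁ + u n (m+1) - u (n+1) (m+1)))
        / ((a₂ + u n m - u n (m+1)) * (a₂ + u (n+1) m - u (n+1) (m+1)))
        = a₁^2 / a₂^2) := by
  have hFI1 : ∀ n m : ℤ,
      (a₁ + u n m - u (n+1) m) * (a₁ + u₁ n m - u₁ (n+1) m) = a₁^2 := by
    intro n m
    rw [hM1, hM2, div_mul_div_comm]
    have e1 : a₁ * v0 (n+1) m * (a₁ * v1 (n+1) m) = a₁^2 := by
      linear_combination a₁^2 * hprod (n+1) m
    have e2 : v1 n m * v0 n m = 1 := by linear_combination hprod n m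
    rw [e1, e2, div_one]
  have hFI2 : ∀ n m : ℤ,
      (a₂ + u n m - u n (m+1)) * (a₂ + u₁ n m - u₁ n (m+1)) = a₂^2 := by
    intro n m
    rw [hM3, hM4, div_mul_div_comm]
    have e1 : a₂ * v0 n (m+1) * (a₂ * v1 n (m+1)) = a₂^2 := by
      linear_combination a₂^2 * hprod n (m+1)
    have e2 : v1 n m * v0 n m = 1 := by linear_combination hprod n m
    rw [e1, e2, div_one]
  refine ⟨fun n m => ⟨hFI1 n m, hFI2 n m⟩, fun n m => ?_⟩
  by_cases ha₁ : a₁ = 0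
  · have h0 : a₁ + u n m - u (n+1) m = 0 := by rw [hM1 n m, ha₁]; simp
    rw [h0, ha₁]
    simp
  · -- all relevant factors are nonzero
    have hP : a₁ + u n m - u (n+1) m ≠ 0 := by
      rw [hM1]; exact div_ne_zero (mul_ne_zero ha₁ (hv0 _ _)) (hv1 _ _)
    have hP' : a₁ + u n (m+1) - u (n+1) (m+1) ≠ 0 := by
      rw [hM1]; exact div_ne_zero (mul_ne_zero ha₁ (hv0 _ _)) (hv1 _ _)
    have hQ : a₂ + u n m - u n (m+1) ≠ 0 := hden n m
    have hQ' : a₂ + u (n+1) m - u (n+1) (m+1) ≠ 0 := hden (n+1) m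
    have hR : a₁ + u₁ n m - u₁ (n+1) m ≠ 0 := by
      rw [hM2]; exact div_ne_zero (mul_ne_zero ha₁ (hv1 _ _)) (hv0 _ _)
    have hR' : a₂ + u₁ n m - u₁ n (m+1) ≠ 0 := by
      rw [hM4]; exact div_ne_zero (mul_ne_zero ha₂ (hv1 _ _)) (hv0 _ _)
    have hs := hS1 n m
    rw [div_eq_div_iff hR hR'] at hs
    have e1 := hFI1 n m
    have e2 := hFI2 n m
    rw [div_eq_div_iff (mul_ne_zero hQ hQ') (pow_ne_zero 2 ha₂)]
    linear_combination
      -((a₁ + u n m - u (n+1) m) * (a₁ + u n (m+1) - u (n+1) (m+1))) * e2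
      + (a₂ + u n m - u n (m+1)) * (a₂ + u (n+1) m - u (n+1) (m+1)) * e1
      + (a₁ + u n m - u (n+1) m) * (a₂ + u n m - u n (m+1)) * hs
end

section
/- Fix 𝒩 ≥ 2, a₁ ∈ ℂ, λ₁ ∈ ℂ. Let τ : ℤ² × (ℤ/𝒩ℤ) → ℂ be nowhere zero, and let θ, φ : ℤ² × (ℤ/𝒩ℤ) → ℂ satisfy, for every l and fixed shifts α, β ∈ ℤ, the discrete linear equation φ(n+1,m,l) = a₁·(τ(n,m,l+α)τ(n+1,m,l+1)/(τ(n,m,l+α+1)τ(n+1,m,l)))·φ(n,m,l+α) + λφ(n,m,l+α+1) with spectral parameter λ, and the same equation for θ with λ replaced by λ₁. Assume θ is nowhere zero. Define τ̃(n,m,l) := θ(n,m,l+α+β)·τ(n,m,l+α+β) and φ̃(n,m,l) := λφ(n,m,l+α+β+1) − λ₁·θ(n,m,l+α+β+1)·θ(n,m,l+α+β)⁻¹·φ(n,m,l+α+β). Then φ̃ and τ̃ satisfy the same discrete linear equation: φ̃(n+1,m,l) = a₁·(τ̃(n,m,l+α)τ̃(n+1,m,l+1)/(τ̃(n,m,l+α+1)τ̃(n+1,m,l)))·φ̃(n,m,l+α)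 + λφ̃(n,m,l+α+1). -/
set_option maxHeartbeats 1000000 in
private lemma darboux_key2 (lam lam₁ r0 r1 θA θA1 θA2 pA pA1 pA2 Θ0 Θ1 : ℂ)
    (hθA : θA ≠ 0) (hθA1 : θA1 ≠ 0) (hΘ0 : Θ0 ≠ 0)
    (eΘ0 : Θ0 = r0 * θA + lam₁ * θA1)
    (eΘ1 : Θ1 = r1 * θA1 + lam₁ * θA2) :
    lam * (r1 * pA1 + lam * pA2) - lam₁ * Θ1 * Θ0⁻¹ * (r0 * pA + lam * pA1)
    = (r0 * θA * Θ1 / (θA1 * Θ0)) * (lam * pA1 - lam₁ * θA1 * θA⁻¹ * pA)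
      + lam * (lam * pA2 - lam₁ * θA2 * θA1⁻¹ * pA1) := by
  subst eΘ0 eΘ1
  field_simp
  ring

set_option maxHeartbeats 1000000 in
private lemma darboux_key (a₁ lam lam₁ tA tA1 tA2 s0 s1 s2 θA θA1 θA2 pA pA1 pA2 Θ0 Θ1 : ℂ)
    (htA1 : tA1 ≠ 0) (hs0 : s0 ≠ 0)
    (hθA : θA ≠ 0) (hθA1 : θA1 ≠ 0) (hΘ0 : Θ0 ≠ 0)
    (eΘ0 : Θ0 = a₁ * (tA * s1 / (tA1 * s0)) * θA + lam₁ * θA1)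
    (eΘ1 : Θ1 = a₁ * (tA1 * s2 / (tA2 * s1)) * θA1 + lam₁ * θA2) :
    lam * (a₁ * (tA1 * s2 / (tA2 * s1)) * pA1 + lam * pA2)
      - lam₁ * Θ1 * Θ0⁻¹ * (a₁ * (tA * s1 / (tA1 * s0)) * pA + lam * pA1)
    = a₁ * ((θA * tA) * (Θ1 * s1) / ((θA1 * tA1) * (Θ0 * s0)))
        * (lam * pA1 - lam₁ * θA1 * θA⁻¹ * pA)
      + lam * (lam * pA2 - lam₁ * θA2 * θA1⁻¹ * pA1) := by
  have hco : a₁ * ((θA * tA) * (Θ1 * s1) / ((θA1 * tA1) * (Θ0 * s0)))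
      = (a₁ * (tA * s1 / (tA1 * s0))) * θA * Θ1 / (θA1 * Θ0) := by
    field_simp
  rw [hco]
  exact darboux_key2 lam lam₁ _ _ θA θA1 θA2 pA pA1 pA2 Θ0 Θ1 hθA hθA1 hΘ0 eΘ0 eΘ1

/-- Covariance of the `ℤ_𝒩` graded discrete Lax equation (in tau-function form) under the
one-fold Darboux transformation. -/
theorem stmt_10 (N : ℕ) [NeZero N] (hN : 2 ≤ N) (a₁ lam lam₁ : ℂ) (α β : ℤ)
    (τ θ φ : ℤ → ℤ → ZMod N → ℂ)
    (hτ0 : ∀ (n m : ℤ) (l : ZMod N), τ n m l ≠ 0)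
    (hθ0 : ∀ (n m : ℤ) (l : ZMod N), θ n m l ≠ 0)
    (hφ : ∀ (n m : ℤ) (l : ZMod N),
      φ (n+1) m l
        = a₁ * (τ n m (l + (α : ZMod N)) * τ (n+1) m (l+1)
            / (τ n m (l + (α : ZMod N) + 1) * τ (n+1) m l)) * φ n m (l + (α : ZMod N))
          + lam * φ n m (l + (α : ZMod N) + 1))
    (hθ : ∀ (n m : ℤ) (l : ZMod N),
      θ (n+1) m l
        = a₁ * (τ n m (l + (α : ZMod N)) * τ (n+1) m (l+1)
            / (τ n m (l + (α : ZMod N) + 1) * τ (n+1) m l)) * θ n m (l + (α : ZMod N))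
          + lam₁ * θ n m (l + (α : ZMod N) + 1))
    (τt φt : ℤ → ℤ → ZMod N → ℂ)
    (hτt : ∀ (n m : ℤ) (l : ZMod N),
      τt n m l = θ n m (l + (α : ZMod N) + (β : ZMod N)) * τ n m (l + (α : ZMod N) + (β : ZMod N)))
    (hφt : ∀ (n m : ℤ) (l : ZMod N),
      φt n m l = lam * φ n m (l + (α : ZMod N) + (β : ZMod N) + 1)
        - lam₁ * θ n m (l + (α : ZMod N) + (β : ZMod N) + 1)
            * (θ n m (l + (α : ZMod N) + (β : ZMod N)))⁻¹
            * φ n m (l + (α : ZMod N) + (β : ZMod N))) :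
    ∀ (n m : ℤ) (l : ZMod N),
      φt (n+1) m l
        = a₁ * (τt n m (l + (α : ZMod N)) * τt (n+1) m (l+1)
            / (τt n m (l + (α : ZMod N) + 1) * τt (n+1) m l)) * φt n m (l + (α : ZMod N))
          + lam * φt n m (l + (α : ZMod N) + 1) := by
  intro n m l
  set A := (α : ZMod N) with hA
  set B := (β : ZMod N) with hB
  have e1 : l + 1 + A + B = l + A + B + 1 := by ring
  have e2 : l + A + A + B = l + A + B + A := by ring
  have e4 : l + A + 1 + A + B = l + A + B + A + 1 := by ring
  have e5 : l + A + B + 1 + A = l + A + B + A + 1 := by ring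
  rw [hφt (n+1) m l, hφt n m (l + A), hφt n m (l + A + 1),
      hτt n m (l + A), hτt (n+1) m (l + 1), hτt n m (l + A + 1), hτt (n+1) m l,
      e1, e2, e4,
      hφ n m (l + A + B + 1), hφ n m (l + A + B), e5]
  have eΘ0 := hθ n m (l + A + B)
  have eΘ1 := hθ n m (l + A + B + 1)
  rw [e5] at eΘ1
  exact darboux_key a₁ lam lam₁
    (τ n m (l + A + B + A)) (τ n m (l + A + B + A + 1)) (τ n m (l + A + B + A + 1 + 1))
    (τ (n+1) m (l + A + B)) (τ (n+1) m (l + A + B + 1)) (τ (n+1) m (l + A + B + 1 + 1))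
    (θ n m (l + A + B + A)) (θ n m (l + A + B + A + 1)) (θ n m (l + A + B + A + 1 + 1))
    (φ n m (l + A + B + A)) (φ n m (l + A + B + A + 1)) (φ n m (l + A + B + A + 1 + 1))
    (θ (n+1) m (l + A + B)) (θ (n+1) m (l + A + B + 1))
    (hτ0 _ _ _) (hτ0 _ _ _) (hθ0 _ _ _) (hθ0 _ _ _) (hθ0 _ _ _) eΘ0 eΘ1
end

section
/- Fix 𝒩 ≥ 2 and λ₁ ∈ ℂ. Let τ, θ, φ : ℝ × (ℤ/𝒩ℤ) → ℂ with τ, θ nowhere zero and all functions differentiable in x, satisfying the continuous Lax equations ∂ₓφ(x,l) = (∂ₓ ln τ(x,l+1) − ∂ₓ ln τ(x,l))φ(x,l) + λφ(x,l+1) and ∂ₓθ(x,l) = (∂ₓ ln τ(x,l+1) − ∂ₓ ln τ(x,l))θ(x,l) + λ₁θ(x,l+1). Define τ̃(x,l) := θ(x,l)τ(x,l) and φ̃(x,l) := ∂ₓφ(x,l) − (∂ₓθ(x,l))θ(x,l)⁻¹φ(x,l). Then φ̃ satisfies ∂ₓφ̃(x,l) = (∂ₓ ln τ̃(x,l+1)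 − ∂ₓ ln τ̃(x,l))φ̃(x,l) + λφ̃(x,l+1) for all l. -/
private lemma darboux_aux (lam lam₁ t t1 t2 p p1 p2 T T1 a a1 a2 : ℂ)
    (h1 : t ≠ 0) (h2 : t1 ≠ 0) (h3 : T ≠ 0) (h4 : T1 ≠ 0) :
    lam * ((a2 - a1) * p1 + lam * p2) -
      ((lam₁ * ((a2 - a1) * t1 + lam₁ * t2) * p
          + lam₁ * t1 * ((a1 - a) * p + lam * p1)) * t
        - lam₁ * t1 * p * ((a1 - a) * t + lam₁ * t1)) / t ^ 2
    = (((((a2 - a1) * t1 + lam₁ * t2) * T1 + t1 * (a1 * T1)) / (t1 * T1))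
        - ((((a1 - a) * t + lam₁ * t1) * T + t * (a * T)) / (t * T)))
        * (lam * p1 - lam₁ * t1 * p / t)
      + lam * (lam * p2 - lam₁ * t2 * p1 / t1) := by
  field_simp
  ring

set_option maxHeartbeats 1000000 in
/-- Covariance of the continuous `ℤ_𝒩` graded spectral problem under the basic Darboux
transformation `τ̃ = θτ`, `φ̃ = ∂ₓφ − (∂ₓθ/θ)φ`. -/
theorem stmt_12 (N : ℕ) [NeZero N] (hN : 2 ≤ N) (lam lam₁ : ℂ)
    (τ θ φ : ℝ → ZMod N → ℂ)
    (hτ0 : ∀ (x : ℝ) (l : ZMod N), τ x l ≠ 0)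
    (hθ0 : ∀ (x : ℝ) (l : ZMod N), θ x l ≠ 0)
    (hτd : ∀ l : ZMod N, ContDiff ℝ 2 (fun y => τ y l))
    (hθd : ∀ l : ZMod N, ContDiff ℝ 2 (fun y => θ y l))
    (hφd : ∀ l : ZMod N, ContDiff ℝ 2 (fun y => φ y l))
    (hφ : ∀ (x : ℝ) (l : ZMod N),
      deriv (fun y => φ y l) x
        = (deriv (fun y => τ y (l+1)) x / τ x (l+1) - deriv (fun y => τ y l) x / τ x l)
            * φ x l + lam * φ x (l+1))
    (hθ : ∀ (x : ℝ) (l : ZMod N),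
      deriv (fun y => θ y l) x
        = (deriv (fun y => τ y (l+1)) x / τ x (l+1) - deriv (fun y => τ y l) x / τ x l)
            * θ x l + lam₁ * θ x (l+1))
    (τt φt : ℝ → ZMod N → ℂ)
    (hτt : ∀ (x : ℝ) (l : ZMod N), τt x l = θ x l * τ x l)
    (hφt : ∀ (x : ℝ) (l : ZMod N),
      φt x l = deriv (fun y => φ y l) x - deriv (fun y => θ y l) x * (θ x l)⁻¹ * φ x l) :
    ∀ (x : ℝ) (l : ZMod N),
      deriv (fun y => φt y l) x
        = (deriv (fun y => τt y (l+1)) x / τt x (l+1) - deriv (fun y => τt y l) x / τt x l)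
            * φt x l + lam * φt x (l+1) := by
  intro x l
  have dθ : ∀ m : ZMod N, ∀ y : ℝ, DifferentiableAt ℝ (fun y => θ y m) y :=
    fun m y => ((hθd m).differentiable (by norm_num)).differentiableAt
  have dφ : ∀ m : ZMod N, ∀ y : ℝ, DifferentiableAt ℝ (fun y => φ y m) y :=
    fun m y => ((hφd m).differentiable (by norm_num)).differentiableAt
  have dτ : ∀ m : ZMod N, ∀ y : ℝ, DifferentiableAt ℝ (fun y => τ y m) y :=
    fun m y => ((hτd m).differentiable (by norm_num)).differentiableAt
  -- closed form for φt
  have key : ∀ (y : ℝ) (m : ZMod N),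
      φt y m = lam * φ y (m+1) - lam₁ * θ y (m+1) * φ y m / θ y m := by
    intro y m
    rw [hφt, hφ, hθ]
    field_simp [hθ0 y m, hτ0 y m, hτ0 y (m+1)]
    ring
  -- derivative of τt
  have hτtd : ∀ m : ZMod N, deriv (fun y => τt y m) x
      = deriv (fun y => θ y m) x * τ x m + θ x m * deriv (fun y => τ y m) x := by
    intro m
    have he : (fun y => τt y m) = fun y => θ y m * τ y m := funext fun y => hτt y m
    rw [he]
    exact (((dθ m x).hasDerivAt).mul ((dτ m x).hasDerivAt)).deriv
  -- derivative of φt via the closed form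
  have he : (fun y => φt y l)
      = fun y => lam * φ y (l+1) - lam₁ * θ y (l+1) * φ y l / θ y l :=
    funext fun y => key y l
  have H := (((dφ (l+1) x).hasDerivAt.const_mul lam).sub
      (((((dθ (l+1) x).hasDerivAt.const_mul lam₁).mul
        ((dφ l x).hasDerivAt)).div ((dθ l x).hasDerivAt) (hθ0 x l))))
  rw [he, (show HasDerivAt (fun y => lam * φ y (l+1) - lam₁ * θ y (l+1) * φ y l / θ y l) _ x from H).deriv, Pi.mul_apply, hτtd, hτtd, hτt, hτt, key x l, key x (l+1),
    hφ x l, hφ x (l+1), hθ x l, hθ x (l+1)]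
  have h1 := hθ0 x l
  have h2 := hθ0 x (l+1)
  have h3 := hτ0 x l
  have h4 := hτ0 x (l+1)
  have h5 := hτ0 x (l+1+1)
  set t := θ x l with ht
  set t1 := θ x (l+1) with ht1
  set t2 := θ x (l+1+1) with ht2
  set p := φ x l with hp
  set p1 := φ x (l+1) with hp1
  set p2 := φ x (l+1+1) with hp2
  set T := τ x l with hT
  set T1 := τ x (l+1) with hT1
  set T2 := τ x (l+1+1) with hT2
  set A := deriv (fun y => τ y l) x with hAd
  set A1 := deriv (fun y => τ y (l+1)) x with hA1d
  set A2 := deriv (fun y => τ y (l+1+1)) x with hA2d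
  set a := A / T with ha
  set a1 := A1 / T1 with ha1
  set a2 := A2 / T2 with ha2
  have hA : A = a * T := by rw [ha]; field_simp
  have hA1 : A1 = a1 * T1 := by rw [ha1]; field_simp
  rw [hA, hA1]
  clear_value t t1 t2 p p1 p2 T T1 T2 A A1 A2
  exact darboux_aux lam lam₁ t t1 t2 p p1 p2 T T1 a a1 a2 h1 h2 h3 h4
end
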